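/- Let C be an N×N Hermitian positive semidefinite complex matrix, h ∈ ℂ^N, σ² > 0, and let d_i > 0, P_i > 0 for i = 1, …, N. Then the supremum over {a ∈ ℂ^N : |a_i|² d_i ≤ P_i for all i} of |h^H a|²/(a^H C a + σ²) equals the supremum over the set {(ã, t) ∈ ℂ^N × ℝ : ã^H C ã + σ² t² = 1 and |ã_i|² d_i ≤ t² P_i for all i} of |h^H ã|². -/

import Mathlib

open Matrix ComplexOrder

lemma quad_smul_re {N : ℕ} (C : Matrix (Fin N) (Fin N) ℂ) (a : Fin N → ℂ) (t : ℝ) :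
    (star ((t : ℂ) • a) ⬝ᵥ C *ᵥ ((t : ℂ) • a)).re = t ^ 2 * (star a ⬝ᵥ C *ᵥ a).re := by
  have : star ((t : ℂ) • a) ⬝ᵥ C *ᵥ ((t : ℂ) • a)
      = ((t : ℂ) ^ 2) * (star a ⬝ᵥ C *ᵥ a) := by
    rw [star_smul, mulVec_smul, smul_dotProduct, dotProduct_smul, smul_eq_mul, smul_eq_mul]
    simp [Complex.star_def, Complex.conj_ofReal]
    ring
  rw [this, ← Complex.ofReal_pow, Complex.re_ofReal_mul]

lemma dot_smul_norm_sq {N : ℕ} (h a : Fin N → ℂ) (t : ℝ) :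
    ‖star h ⬝ᵥ ((t : ℂ) • a)‖ ^ 2 = t ^ 2 * ‖star h ⬝ᵥ a‖ ^ 2 := by
  rw [dotProduct_smul, smul_eq_mul, norm_mul, mul_pow, Complex.norm_real, Real.norm_eq_abs, sq_abs]

lemma smul_norm_sq_entry {N : ℕ} (a : Fin N → ℂ) (t : ℝ) (i : Fin N) :
    ‖((t : ℂ) • a) i‖ ^ 2 = t ^ 2 * ‖a i‖ ^ 2 := by
  simp [norm_smul, mul_pow, sq_abs]

/-- QCRQ homogenization: the supremum of `|h^H a|²/(a^H C a + σ²)` over the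
individual power constraints `|aᵢ|² dᵢ ≤ Pᵢ` equals the supremum of `|h^H ã|²`
over `{(ã,t) : ã^H C ã + σ² t² = 1, |ãᵢ|² dᵢ ≤ t² Pᵢ}`. -/
theorem qcrq_homogenization
    (N : ℕ) (C : Matrix (Fin N) (Fin N) ℂ) (hC : C.PosSemidef)
    (h : Fin N → ℂ) (σ2 : ℝ) (hσ2 : 0 < σ2)
    (d P : Fin N → ℝ) (hd : ∀ i, 0 < d i) (hP : ∀ i, 0 < P i) :
    sSup {x : ℝ | ∃ a : Fin N → ℂ, (∀ i, ‖a i‖ ^ 2 * d i ≤ P i) ∧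
        x = ‖star h ⬝ᵥ a‖ ^ 2 / ((star a ⬝ᵥ C *ᵥ a).re + σ2)} =
    sSup {x : ℝ | ∃ (a : Fin N → ℂ) (t : ℝ),
        (star a ⬝ᵥ C *ᵥ a).re + σ2 * t ^ 2 = 1 ∧
        (∀ i, ‖a i‖ ^ 2 * d i ≤ t ^ 2 * P i) ∧
        x = ‖star h ⬝ᵥ a‖ ^ 2} := by
  congr 1
  ext x
  simp only [Set.mem_setOf_eq]
  constructor
  · rintro ⟨a, ha, rfl⟩
    have hQ : 0 ≤ (star a ⬝ᵥ C *ᵥ a).re := by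
      have := hC.dotProduct_mulVec_nonneg a
      rw [Complex.le_def] at this
      simpa using this.1
    set s : ℝ := (star a ⬝ᵥ C *ᵥ a).re + σ2 with hs
    have hspos : 0 < s := by positivity
    set t : ℝ := 1 / Real.sqrt s with ht
    have hts : t ^ 2 = 1 / s := by
      rw [ht, div_pow, one_pow, Real.sq_sqrt hspos.le]
    have htpos : 0 < t ^ 2 := by rw [hts]; positivity
    refine ⟨(t : ℂ) • a, t, ?_, ?_, ?_⟩
    · rw [quad_smul_re, hts]
      field_simp
      exact hs.symm
    · intro i
      rw [smul_norm_sq_entry, mul_assoc]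
      exact mul_le_mul_of_nonneg_left (ha i) htpos.le
    · rw [dot_smul_norm_sq, hts]
      field_simp
  · rintro ⟨a, t, heq, hcon, rfl⟩
    have htne : t ≠ 0 := by
      intro h0
      have haz : a = 0 := by
        funext i
        have := hcon i
        rw [h0] at this
        have hni : ‖a i‖ ^ 2 ≤ 0 := by nlinarith [hd i]
        have : ‖a i‖ = 0 := by nlinarith [norm_nonneg (a i)]
        simpa using this
      rw [haz, h0] at heq
      simp at heq
    have ht2 : 0 < t ^ 2 := by positivity
    refine ⟨((1 / t : ℝ) : ℂ) • a, ?_, ?_⟩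
    · intro i
      rw [smul_norm_sq_entry]
      have := hcon i
      rw [div_pow, one_pow, div_mul_eq_mul_div, div_mul_eq_mul_div, div_le_iff₀ ht2,
        one_mul]
      calc ‖a i‖ ^ 2 * d i ≤ t ^ 2 * P i := hcon i
        _ = P i * t ^ 2 := by ring
    · rw [dot_smul_norm_sq, quad_smul_re]
      have hden : (1/t) ^ 2 * (star a ⬝ᵥ C *ᵥ a).re + σ2 = 1 / t ^ 2 := by
        field_simp
        nlinarith [heq]
      rw [hden]
      field_simp
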